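/- Let A be a unital C*-algebra and d ≥ 1. Suppose the data (w_{i,k}), (u_j), (m_i), (n_j), (c_i), r_k, θ₁, x = Σ_{j∈F} d_j u_j and c_x are as in the context. Then for every n ≥ 1 and every sign tuple ε̄ = (ε₁,…,ε_n) ∈ {−1,+1}^n, the (possibly infinite) sum over all tuples k̄ = (k₁,…,k_n) ∈ (ℤ^d)^n of ‖δ^{ε_n}_{k_n}(⋯(δ^{ε₁}_{k₁}(x))⋯)‖ is at most (2·θ₁·c_x)^n. -/

import Mathlib

open scoped BigOperators
open scoped ENNReal NNReal
set_option linter.unusedSectionVars false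
set_option linter.unnecessarySeqFocus false
set_option linter.unusedVariables false

/-- Iterated application of the (signed) derivations
`δ_k(a) = a r_k - r_k a` (sign `+1`), `δ†_k(a) = r_k* a - a r_k*` (sign `-1`),
and the Lindblad map `ℒ_k(a) = (1/2)(δ†_k(a) r_k + r_k* δ_k(a))` (sign `0`),
applied first with index `0` (innermost) and last with index `n-1` (outermost). -/
noncomputable def deltaIter {A K : Type*} [Ring A] [StarRing A] [Module ℂ A]
    (r : K → A) {n : ℕ} (ε : Fin n → ℤ) (k : Fin n → K) (x : A) : A :=
  (List.ofFn fun l : Fin n => fun a : A =>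
    if ε l = 1 then a * r (k l) - r (k l) * a
    else if ε l = -1 then star (r (k l)) * a - a * star (r (k l))
    else (2 : ℂ)⁻¹ • ((star (r (k l)) * a - a * star (r (k l))) * r (k l)
          + star (r (k l)) * (a * r (k l) - r (k l) * a))).foldl (fun a f => f a) x

section Aux
variable {A K : Type*} [NormedRing A] [StarRing A] [CStarRing A] [NormedAlgebra ℂ A]
  [CompleteSpace A]

noncomputable def dstep (r : K → A) (e : ℤ) (k : K) (a : A) : A :=
  if e = 1 then a * r k - r k * a
  else if e = -1 then star (r k) * a - a * star (r k)
  else (2 : ℂ)⁻¹ • ((star (r k) * a - a * star (r k)) * r k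
        + star (r k) * (a * r k - r k * a))

lemma deltaIter_nil (r : K → A) (ε : Fin 0 → ℤ) (k : Fin 0 → K) (a : A) :
    deltaIter r ε k a = a := by simp [deltaIter]

lemma deltaIter_succ (r : K → A) {n : ℕ} (ε : Fin (n+1) → ℤ) (k : Fin (n+1) → K) (a : A) :
    deltaIter r ε k a =
      deltaIter r (fun l => ε l.succ) (fun l => k l.succ) (dstep r (ε 0) (k 0) a) := by
  simp [deltaIter, dstep, List.ofFn_succ]

lemma dstep_hasSum {ι : Type*} (r : K → A) (e : ℤ) (k : K) {f : ι → A} {x : A}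
    (h : HasSum f x) : HasSum (fun i => dstep r e k (f i)) (dstep r e k x) := by
  unfold dstep
  split_ifs
  · exact (h.mul_right _).sub (h.mul_left _)
  · exact (h.mul_left _).sub (h.mul_right _)
  · exact ((((h.mul_left _).sub (h.mul_right _)).mul_right _).add
      (((h.mul_right _).sub (h.mul_left _)).mul_left _)).const_smul _

lemma dstep_sub (r : K → A) (e : ℤ) (k : K) (a b : A) :
    dstep r e k (a - b) = dstep r e k a - dstep r e k b := by
  unfold dstep
  split_ifs <;>
    simp only [mul_sub, sub_mul, smul_sub, smul_add, ← smul_sub] <;> abel_nf <;>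
    simp [smul_sub, smul_add] <;> abel

lemma dstep_zero (r : K → A) (e : ℤ) (k : K) : dstep r e k 0 = 0 := by
  unfold dstep; split_ifs <;> simp

lemma dstep_add (r : K → A) (e : ℤ) (k : K) (a b : A) :
    dstep r e k (a + b) = dstep r e k a + dstep r e k b := by
  unfold dstep
  split_ifs <;> simp only [mul_add, add_mul, sub_mul, mul_sub, smul_add, smul_sub] <;> abel

lemma dstep_smul (r : K → A) (e : ℤ) (k : K) (t : ℂ) (a : A) :
    dstep r e k (t • a) = t • dstep r e k a := by
  unfold dstep
  split_ifs <;>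
    simp only [mul_smul_comm, smul_mul_assoc, ← smul_sub, ← smul_add, smul_comm ((2:ℂ)⁻¹) t]

lemma dstep_norm_le (r : K → A) {e : ℤ} (he : e = 1 ∨ e = -1) (k : K) (a : A) :
    ‖dstep r e k a‖ ≤ 2 * ‖r k‖ * ‖a‖ := by
  have h1 : ‖a * r k - r k * a‖ ≤ 2 * ‖r k‖ * ‖a‖ := by
    calc ‖a * r k - r k * a‖ ≤ ‖a * r k‖ + ‖r k * a‖ := norm_sub_le _ _
    _ ≤ ‖a‖ * ‖r k‖ + ‖r k‖ * ‖a‖ := add_le_add (norm_mul_le _ _) (norm_mul_le _ _)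
    _ = 2 * ‖r k‖ * ‖a‖ := by ring
  have h2 : ‖star (r k) * a - a * star (r k)‖ ≤ 2 * ‖r k‖ * ‖a‖ := by
    calc ‖star (r k) * a - a * star (r k)‖ ≤ ‖star (r k) * a‖ + ‖a * star (r k)‖ :=
          norm_sub_le _ _
    _ ≤ ‖star (r k)‖ * ‖a‖ + ‖a‖ * ‖star (r k)‖ := add_le_add (norm_mul_le _ _) (norm_mul_le _ _)
    _ = 2 * ‖r k‖ * ‖a‖ := by rw [norm_star]; ring
  rcases he with he | he <;> subst he <;> simpa [dstep] using (by assumption : _)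

end Aux

section Aux2
variable {A K : Type*} [NormedRing A] [StarRing A] [CStarRing A] [NormedAlgebra ℂ A]
  [CompleteSpace A]

lemma deltaIter_hasSum {ι : Type*} (r : K → A) : ∀ {n : ℕ} (ε : Fin n → ℤ) (k : Fin n → K)
    {f : ι → A} {x : A}, HasSum f x →
    HasSum (fun i => deltaIter r ε k (f i)) (deltaIter r ε k x)
  | 0, ε, k, f, x, h => by simpa [deltaIter_nil] using h
  | (n+1), ε, k, f, x, h => by
      simp only [deltaIter_succ]
      exact deltaIter_hasSum r _ _ (dstep_hasSum r _ _ h)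

lemma deltaIter_sub (r : K → A) : ∀ {n : ℕ} (ε : Fin n → ℤ) (k : Fin n → K) (a b : A),
    deltaIter r ε k (a - b) = deltaIter r ε k a - deltaIter r ε k b
  | 0, ε, k, a, b => by simp [deltaIter_nil]
  | (n+1), ε, k, a, b => by
      simp only [deltaIter_succ, dstep_sub]
      exact deltaIter_sub r _ _ _ _

lemma deltaIter_add (r : K → A) : ∀ {n : ℕ} (ε : Fin n → ℤ) (k : Fin n → K) (a b : A),
    deltaIter r ε k (a + b) = deltaIter r ε k a + deltaIter r ε k b
  | 0, ε, k, a, b => by simp [deltaIter_nil]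
  | (n+1), ε, k, a, b => by
      simp only [deltaIter_succ, dstep_add]
      exact deltaIter_add r _ _ _ _

lemma deltaIter_zero (r : K → A) : ∀ {n : ℕ} (ε : Fin n → ℤ) (k : Fin n → K),
    deltaIter r ε k (0 : A) = 0
  | 0, ε, k => by simp [deltaIter_nil]
  | (n+1), ε, k => by
      simp only [deltaIter_succ, dstep_zero]
      exact deltaIter_zero r _ _

lemma deltaIter_smul (r : K → A) : ∀ {n : ℕ} (ε : Fin n → ℤ) (k : Fin n → K) (t : ℂ) (a : A),
    deltaIter r ε k (t • a) = t • deltaIter r ε k a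
  | 0, ε, k, t, a => by simp [deltaIter_nil]
  | (n+1), ε, k, t, a => by
      simp only [deltaIter_succ, dstep_smul]
      exact deltaIter_smul r _ _ _ _

lemma deltaIter_neg (r : K → A) {n : ℕ} (ε : Fin n → ℤ) (k : Fin n → K) (a : A) :
    deltaIter r ε k (-a) = -deltaIter r ε k a := by
  have := deltaIter_sub r ε k 0 a
  simpa [deltaIter_zero] using this

lemma deltaIter_norm_le (r : K → A) : ∀ {n : ℕ} (ε : Fin n → ℤ),
    (∀ l, ε l = 1 ∨ ε l = -1) → ∀ (k : Fin n → K) (a : A),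
    ‖deltaIter r ε k a‖ ≤ (∏ l, (2 * ‖r (k l)‖)) * ‖a‖
  | 0, ε, hε, k, a => by simp [deltaIter_nil]
  | (n+1), ε, hε, k, a => by
      rw [deltaIter_succ, Fin.prod_univ_succ]
      calc ‖deltaIter r (fun l => ε l.succ) (fun l => k l.succ) (dstep r (ε 0) (k 0) a)‖
          ≤ (∏ l : Fin n, (2 * ‖r (k l.succ)‖)) * ‖dstep r (ε 0) (k 0) a‖ :=
            deltaIter_norm_le r _ (fun l => hε l.succ) _ _
        _ ≤ (∏ l : Fin n, (2 * ‖r (k l.succ)‖)) * (2 * ‖r (k 0)‖ * ‖a‖) := by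
            refine mul_le_mul_of_nonneg_left (dstep_norm_le r (hε 0) _ _) ?_
            positivity
        _ = 2 * ‖r (k 0)‖ * (∏ l : Fin n, (2 * ‖r (k l.succ)‖)) * ‖a‖ := by ring

lemma hasSum_nnnorm_le {ι : Type*} {f : ι → A} {s : A} (h : HasSum f s) :
    (‖s‖₊ : ℝ≥0∞) ≤ ∑' i, (‖f i‖₊ : ℝ≥0∞) := by
  by_cases hfin : (∑' i, (‖f i‖₊ : ℝ≥0∞)) = ⊤
  · simp [hfin]
  · have hsum : Summable fun i => ‖f i‖₊ := ENNReal.tsum_coe_ne_top_iff_summable.mp hfin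
    have hsumr : Summable fun i => ‖f i‖ := by
      simpa [coe_nnnorm] using NNReal.summable_coe.mpr hsum
    have h1 : ‖s‖ ≤ ∑' i, ‖f i‖ := by
      rw [← h.tsum_eq]; exact norm_tsum_le_tsum_norm hsumr
    have h3 : ‖s‖₊ ≤ ∑' i, ‖f i‖₊ := by
      rw [← NNReal.coe_le_coe, NNReal.coe_tsum]
      simpa [coe_nnnorm] using h1
    calc (‖s‖₊ : ℝ≥0∞) ≤ ((∑' i, ‖f i‖₊ : ℝ≥0) : ℝ≥0∞) := ENNReal.coe_le_coe.mpr h3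
      _ = ∑' i, (‖f i‖₊ : ℝ≥0∞) := ENNReal.coe_tsum hsum

end Aux2

section AuxMain
variable {A K : Type*} [NormedRing A] [StarRing A] [CStarRing A] [NormedAlgebra ℂ A]
  [CompleteSpace A]

lemma auxMain {I : Type*} (w : I → K → A) (hwnorm : ∀ i k, ‖w i k‖ ≤ 1)
    (hwcomm : ∀ i k i' k', Commute (w i k) (w i' k'))
    (hwcommstar : ∀ i k i' k', Commute (star (w i k)) (w i' k'))
    (S : I → Set K) (hS : ∀ i, (S i).Finite)
    (c : I → ℂ)
    (r : K → A) (hr : ∀ k, HasSum (fun i => c i • w i k) (r k))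
    (t : ℝ≥0∞) (ht : ∑' i, (‖c i‖₊ : ℝ≥0∞) * ((hS i).toFinset.card : ℝ≥0∞) ≤ t) :
    ∀ (n : ℕ) (ε : Fin n → ℤ), (∀ l, ε l = 1 ∨ ε l = -1) →
    ∀ (a : A), (∀ i k, k ∉ S i → Commute a (w i k) ∧ Commute a (star (w i k))) →
    ∑' kb : Fin n → K, (‖deltaIter r ε kb a‖₊ : ℝ≥0∞) ≤ (2 * t) ^ n * ‖a‖₊ := by
  classical
  intro n
  induction n with
  | zero =>
    intro ε hε a ha
    have h0 : ∑' kb : Fin 0 → K, (‖deltaIter r ε kb a‖₊ : ℝ≥0∞) = (‖a‖₊ : ℝ≥0∞) := by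
      rw [tsum_eq_single (default : Fin 0 → K)
        (fun b hb => absurd (Subsingleton.elim b default) hb)]
      rw [deltaIter_nil]
    rw [h0, pow_zero, one_mul]
  | succ n IH =>
    intro ε hε a ha
    set ε' : Fin n → ℤ := fun l => ε l.succ with hε'def
    have hε' : ∀ l, ε' l = 1 ∨ ε' l = -1 := fun l => hε l.succ
    -- key pointwise-in-k0 estimate
    have key : ∀ k0 : K,
        ∑' k' : Fin n → K, (‖deltaIter r ε' k' (dstep r (ε 0) k0 a)‖₊ : ℝ≥0∞)
          ≤ ∑' i : I,
              (if k0 ∈ S i then (2 * t) ^ n * (2 * ((‖c i‖₊ : ℝ≥0∞) * ‖a‖₊)) else 0) := by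
      intro k0
      obtain ⟨v, s, hvsum, hs, hvnorm, hvgood, hvcomm0⟩ :
          ∃ (v : I → A) (s : A),
            HasSum (fun i => a * v i - v i * a) s ∧
            (s = dstep r (ε 0) k0 a ∨ s = -(dstep r (ε 0) k0 a)) ∧
            (∀ i, ‖v i‖ ≤ ‖c i‖) ∧
            (∀ i i' k', Commute (v i) (w i' k') ∧ Commute (v i) (star (w i' k'))) ∧
            (∀ i, k0 ∉ S i → a * v i = v i * a) := by
        rcases hε 0 with h0 | h0
        · refine ⟨fun i => c i • w i k0, a * r k0 - r k0 * a,
            ((hr k0).mul_left a).sub ((hr k0).mul_right a), Or.inl (by simp [dstep, h0]),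
            fun i => ?_, fun i i' k' => ?_, fun i hk => ?_⟩
          · rw [norm_smul]
            exact mul_le_of_le_one_right (norm_nonneg _) (hwnorm i k0)
          · exact ⟨(hwcomm i k0 i' k').smul_left _,
              ((hwcommstar i' k' i k0).symm).smul_left _⟩
          · exact ((ha i k0 hk).1.smul_right _).eq
        · refine ⟨fun i => star (c i • w i k0), a * star (r k0) - star (r k0) * a,
            ((hr k0).star.mul_left a).sub ((hr k0).star.mul_right a),
            Or.inr (by simp [dstep, h0, neg_sub]),
            fun i => ?_, fun i i' k' => ?_, fun i hk => ?_⟩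
          · rw [norm_star, norm_smul]
            exact mul_le_of_le_one_right (norm_nonneg _) (hwnorm i k0)
          · constructor
            · have h1 : Commute (c i • w i k0) (star (w i' k')) :=
                ((hwcommstar i' k' i k0).symm).smul_left _
              simpa [star_star] using h1.star_star
            · exact ((hwcomm i k0 i' k').smul_left _).star_star
          · have h2 : Commute (star a) (w i k0) := by
              simpa [star_star] using (ha i k0 hk).2.star_star
            have h3 : Commute a (star (c i • w i k0)) := by
              simpa [star_star] using (h2.smul_right (c i)).star_star
            exact h3.eq
      -- norms of v in ℝ≥0∞
      have hvnn : ∀ i, (‖v i‖₊ : ℝ≥0∞) ≤ (‖c i‖₊ : ℝ≥0∞) := by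
        intro i; exact_mod_cast hvnorm i
      have hΦeq : ∀ k' : Fin n → K,
          (‖deltaIter r ε' k' (dstep r (ε 0) k0 a)‖₊ : ℝ≥0∞) = ‖deltaIter r ε' k' s‖₊ := by
        intro k'
        rcases hs with hs | hs
        · rw [hs]
        · rw [hs, deltaIter_neg, nnnorm_neg]
      have hGb : ∀ k' : Fin n → K,
          (‖deltaIter r ε' k' s‖₊ : ℝ≥0∞) ≤ ∑' i : I,
            (if k0 ∈ S i then
              ((‖deltaIter r ε' k' (a * v i)‖₊ : ℝ≥0∞) + ‖deltaIter r ε' k' (v i * a)‖₊)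
            else 0) := by
        intro k'
        refine le_trans (hasSum_nnnorm_le (deltaIter_hasSum r ε' k' hvsum)) ?_
        refine ENNReal.tsum_le_tsum (fun i => ?_)
        by_cases hk : k0 ∈ S i
        · rw [if_pos hk, deltaIter_sub]
          exact_mod_cast nnnorm_sub_le _ _
        · rw [if_neg hk, sub_eq_zero_of_eq (hvcomm0 i hk), deltaIter_zero]
          simp
      calc ∑' k' : Fin n → K, (‖deltaIter r ε' k' (dstep r (ε 0) k0 a)‖₊ : ℝ≥0∞)
          = ∑' k' : Fin n → K, (‖deltaIter r ε' k' s‖₊ : ℝ≥0∞) := by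
            exact tsum_congr hΦeq
        _ ≤ ∑' k' : Fin n → K, ∑' i : I,
              (if k0 ∈ S i then
                ((‖deltaIter r ε' k' (a * v i)‖₊ : ℝ≥0∞) + ‖deltaIter r ε' k' (v i * a)‖₊)
              else 0) := ENNReal.tsum_le_tsum hGb
        _ = ∑' i : I, ∑' k' : Fin n → K,
              (if k0 ∈ S i then
                ((‖deltaIter r ε' k' (a * v i)‖₊ : ℝ≥0∞) + ‖deltaIter r ε' k' (v i * a)‖₊)
              else 0) := ENNReal.tsum_comm
        _ ≤ ∑' i : I,
              (if k0 ∈ S i then (2 * t) ^ n * (2 * ((‖c i‖₊ : ℝ≥0∞) * ‖a‖₊)) else 0) := by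
            refine ENNReal.tsum_le_tsum (fun i => ?_)
            by_cases hk : k0 ∈ S i
            · simp only [if_pos hk]
              rw [ENNReal.tsum_add]
              have hgood1 : ∀ i' k'', k'' ∉ S i' →
                  Commute (a * v i) (w i' k'') ∧ Commute (a * v i) (star (w i' k'')) :=
                fun i' k'' hk'' => ⟨((ha i' k'' hk'').1).mul_left ((hvgood i i' k'').1),
                  ((ha i' k'' hk'').2).mul_left ((hvgood i i' k'').2)⟩
              have hgood2 : ∀ i' k'', k'' ∉ S i' →
                  Commute (v i * a) (w i' k'') ∧ Commute (v i * a) (star (w i' k'')) :=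
                fun i' k'' hk'' => ⟨((hvgood i i' k'').1).mul_left ((ha i' k'' hk'').1),
                  ((hvgood i i' k'').2).mul_left ((ha i' k'' hk'').2)⟩
              have b1 := IH ε' hε' (a * v i) hgood1
              have b2 := IH ε' hε' (v i * a) hgood2
              have n1 : (‖a * v i‖₊ : ℝ≥0∞) ≤ ‖a‖₊ * ‖c i‖₊ := by
                refine le_trans ?_ (mul_le_mul_right (hvnn i) _)
                exact_mod_cast nnnorm_mul_le a (v i)
              have n2 : (‖v i * a‖₊ : ℝ≥0∞) ≤ ‖c i‖₊ * ‖a‖₊ := by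
                refine le_trans ?_ (mul_le_mul_left (hvnn i) _)
                exact_mod_cast nnnorm_mul_le (v i) a
              calc (∑' k' : Fin n → K, (‖deltaIter r ε' k' (a * v i)‖₊ : ℝ≥0∞))
                    + ∑' k' : Fin n → K, (‖deltaIter r ε' k' (v i * a)‖₊ : ℝ≥0∞)
                  ≤ (2 * t) ^ n * ‖a * v i‖₊ + (2 * t) ^ n * ‖v i * a‖₊ := add_le_add b1 b2
                _ ≤ (2 * t) ^ n * (‖a‖₊ * ‖c i‖₊) + (2 * t) ^ n * (‖c i‖₊ * ‖a‖₊) := by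
                    gcongr
                _ = (2 * t) ^ n * (2 * ((‖c i‖₊ : ℝ≥0∞) * ‖a‖₊)) := by ring
            · simp only [if_neg hk, tsum_zero, le_refl]
    -- reindex the outer sum and conclude
    have hre : ∑' kb : Fin (n+1) → K, (‖deltaIter r ε kb a‖₊ : ℝ≥0∞)
        = ∑' k0 : K, ∑' k' : Fin n → K,
            (‖deltaIter r ε' k' (dstep r (ε 0) k0 a)‖₊ : ℝ≥0∞) := by
      rw [← (Fin.consEquiv (fun _ : Fin (n+1) => K)).tsum_eq
        (fun kb => (‖deltaIter r ε kb a‖₊ : ℝ≥0∞)), ENNReal.tsum_prod']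
      refine tsum_congr (fun k0 => tsum_congr (fun k' => ?_))
      have hcons : ((Fin.consEquiv (fun _ : Fin (n+1) => K)) (k0, k')) = Fin.cons k0 k' := by
        ext l; rw [Fin.consEquiv_apply]
      rw [hcons, deltaIter_succ r ε (Fin.cons k0 k') a]
      simp [Fin.cons_zero, Fin.cons_succ]; rfl
    rw [hre]
    calc ∑' k0 : K, ∑' k' : Fin n → K,
            (‖deltaIter r ε' k' (dstep r (ε 0) k0 a)‖₊ : ℝ≥0∞)
        ≤ ∑' k0 : K, ∑' i : I,
            (if k0 ∈ S i then (2 * t) ^ n * (2 * ((‖c i‖₊ : ℝ≥0∞) * ‖a‖₊)) else 0) :=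
          ENNReal.tsum_le_tsum key
      _ = ∑' i : I, ∑' k0 : K,
            (if k0 ∈ S i then (2 * t) ^ n * (2 * ((‖c i‖₊ : ℝ≥0∞) * ‖a‖₊)) else 0) :=
          ENNReal.tsum_comm
      _ = ∑' i : I, ((hS i).toFinset.card : ℝ≥0∞)
            * ((2 * t) ^ n * (2 * ((‖c i‖₊ : ℝ≥0∞) * ‖a‖₊))) := by
          refine tsum_congr (fun i => ?_)
          rw [tsum_eq_sum (s := (hS i).toFinset)
            (fun k0 hk0 => if_neg (by simpa [Set.Finite.mem_toFinset] using hk0))]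
          rw [Finset.sum_congr rfl
            (fun k0 hk0 => if_pos ((hS i).mem_toFinset.mp hk0))]
          rw [Finset.sum_const, nsmul_eq_mul]
      _ = ∑' i : I, ((‖c i‖₊ : ℝ≥0∞) * ((hS i).toFinset.card : ℝ≥0∞))
            * ((2 * t) ^ n * (2 * ‖a‖₊)) := by
          refine tsum_congr (fun i => ?_); ring
      _ = (∑' i : I, (‖c i‖₊ : ℝ≥0∞) * ((hS i).toFinset.card : ℝ≥0∞))
            * ((2 * t) ^ n * (2 * ‖a‖₊)) := ENNReal.tsum_mul_right
      _ ≤ t * ((2 * t) ^ n * (2 * ‖a‖₊)) := mul_le_mul_left ht _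
      _ = (2 * t) ^ (n + 1) * ‖a‖₊ := by rw [pow_succ]; ring

end AuxMain

lemma deltaIter_finsetSum {A K : Type*} [NormedRing A] [StarRing A] [CStarRing A]
    [NormedAlgebra ℂ A] [CompleteSpace A] (r : K → A) {n : ℕ} (ε : Fin n → ℤ)
    (k : Fin n → K) {J : Type*} (F : Finset J) (g : J → A) :
    deltaIter r ε k (∑ j ∈ F, g j) = ∑ j ∈ F, deltaIter r ε k (g j) := by
  classical
  induction F using Finset.induction_on with
  | empty => simp [deltaIter_zero]
  | insert _ _ h ih => rw [Finset.sum_insert h, deltaIter_add, ih, Finset.sum_insert h]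

/-- Lemma 3.1(i): for `x = ∑_{j ∈ F} d_j u_j` local and signs `ε_l ∈ {+1, -1}`, the sum over
all tuples `k̄ ∈ (ℤ^d)^n` of `‖δ^{ε_n}_{k_n}(⋯(δ^{ε₁}_{k₁}(x))⋯)‖` is at most `(2 θ₁ c_x)^n`. -/
theorem lemma31i
    {A : Type*} [NormedRing A] [StarRing A] [CStarRing A] [NormedAlgebra ℂ A]
    [CompleteSpace A]
    {I J : Type*} [Countable I]
    (d : ℕ) (hd : 1 ≤ d)
    (w : I → (Fin d → ℤ) → A) (hwnorm : ∀ i k, ‖w i k‖ ≤ 1)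
    (hwcomm : ∀ i k i' k', Commute (w i k) (w i' k'))
    (hwcommstar : ∀ i k i' k', Commute (star (w i k)) (w i' k'))
    (u : J → A) (hunorm : ∀ j, ‖u j‖ ≤ 1)
    (m : I → ℝ) (hm : ∀ i, 0 ≤ m i) (ν : J → ℝ) (hν : ∀ j, 0 ≤ ν j)
    (hfin : ∀ i j,
      ({k : Fin d → ℤ | w i k * u j ≠ u j * w i k ∨
          star (w i k) * u j ≠ u j * star (w i k)}).Finite ∧
        (({k : Fin d → ℤ | w i k * u j ≠ u j * w i k ∨
            star (w i k) * u j ≠ u j * star (w i k)}).ncard : ℝ) ≤ m i * ν j)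
    (c : I → ℂ) (hc : Summable fun i => ‖c i‖)
    (θ₁ : ℝ) (hθ : HasSum (fun i => ‖c i‖ * m i) θ₁)
    (r : (Fin d → ℤ) → A) (hr : ∀ k, HasSum (fun i => c i • w i k) (r k))
    (F : Finset J) (dcoef : J → ℂ) (x : A) (hx : x = ∑ j ∈ F, dcoef j • u j)
    (cx : ℝ) (hcx1 : 1 ≤ cx)
    (hcx : ∀ M : ℕ, 1 ≤ M → ∑ j ∈ F, ‖dcoef j‖ * ν j ^ M ≤ cx ^ M)
    (n : ℕ) (hn : 1 ≤ n) (ε : Fin n → ℤ) (hε : ∀ l, ε l = 1 ∨ ε l = -1) :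
    Summable (fun kbar : Fin n → (Fin d → ℤ) => ‖deltaIter r ε kbar x‖) ∧
      ∑' kbar : Fin n → (Fin d → ℤ), ‖deltaIter r ε kbar x‖ ≤ (2 * θ₁ * cx) ^ n := by
  classical
  have hθ0 : 0 ≤ θ₁ := hθ.nonneg (fun i => mul_nonneg (norm_nonneg _) (hm i))
  have hcx0 : 0 ≤ cx := le_trans zero_le_one hcx1
  have hB0 : (0:ℝ) ≤ (2 * θ₁ * cx) ^ n :=
    pow_nonneg (mul_nonneg (mul_nonneg (by norm_num) hθ0) hcx0) n
  set S : I → J → Set (Fin d → ℤ) := fun i j =>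
    {k | w i k * u j ≠ u j * w i k ∨ star (w i k) * u j ≠ u j * star (w i k)} with hSdef
  -- per j bound from auxMain
  have hper : ∀ j, ∑' kb : Fin n → (Fin d → ℤ), (‖deltaIter r ε kb (u j)‖₊ : ℝ≥0∞)
      ≤ ENNReal.ofReal ((2 * θ₁ * ν j) ^ n) := by
    intro j
    have hSfin : ∀ i, (S i j).Finite := fun i => (hfin i j).1
    have hcard : ∀ i, (((hSfin i).toFinset.card : ℕ) : ℝ) ≤ m i * ν j := by
      intro i
      have h2 := (hfin i j).2
      rwa [Set.ncard_eq_toFinset_card (S i j) (hSfin i)] at h2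
    have ht : ∑' i, (‖c i‖₊ : ℝ≥0∞) * (((hSfin i).toFinset.card : ℕ) : ℝ≥0∞)
        ≤ ENNReal.ofReal (θ₁ * ν j) := by
      calc ∑' i, (‖c i‖₊ : ℝ≥0∞) * (((hSfin i).toFinset.card : ℕ) : ℝ≥0∞)
          ≤ ∑' i, ENNReal.ofReal ((‖c i‖ * m i) * ν j) := by
            refine ENNReal.tsum_le_tsum (fun i => ?_)
            rw [← enorm_eq_nnnorm, ← ofReal_norm, ← ENNReal.ofReal_natCast,
              ← ENNReal.ofReal_mul (norm_nonneg _)]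
            refine ENNReal.ofReal_le_ofReal ?_
            rw [mul_assoc]
            exact mul_le_mul_of_nonneg_left (hcard i) (norm_nonneg _)
        _ = ENNReal.ofReal (θ₁ * ν j) := by
            rw [← ENNReal.ofReal_tsum_of_nonneg
              (fun i => mul_nonneg (mul_nonneg (norm_nonneg _) (hm i)) (hν j))
              (hθ.summable.mul_right (ν j)), (hθ.mul_right (ν j)).tsum_eq]
    have hgood : ∀ i k, k ∉ S i j →
        Commute (u j) (w i k) ∧ Commute (u j) (star (w i k)) := by
      intro i k hk
      simp only [hSdef, Set.mem_setOf_eq, not_or, not_not] at hk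
      exact ⟨hk.1.symm, hk.2.symm⟩
    have hmain := auxMain w hwnorm hwcomm hwcommstar (fun i => S i j) hSfin c r hr
      (ENNReal.ofReal (θ₁ * ν j)) ht n ε hε (u j) hgood
    have hu1 : (‖u j‖₊ : ℝ≥0∞) ≤ 1 := by
      rw [← enorm_eq_nnnorm, ← ofReal_norm]
      calc ENNReal.ofReal ‖u j‖ ≤ ENNReal.ofReal 1 := ENNReal.ofReal_le_ofReal (hunorm j)
        _ = 1 := ENNReal.ofReal_one
    calc ∑' kb : Fin n → (Fin d → ℤ), (‖deltaIter r ε kb (u j)‖₊ : ℝ≥0∞)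
        ≤ (2 * ENNReal.ofReal (θ₁ * ν j)) ^ n * ‖u j‖₊ := hmain
      _ ≤ (2 * ENNReal.ofReal (θ₁ * ν j)) ^ n * 1 := mul_le_mul_right hu1 _
      _ = ENNReal.ofReal ((2 * θ₁ * ν j) ^ n) := by
          rw [mul_one, ENNReal.ofReal_pow
            (mul_nonneg (mul_nonneg (by norm_num) hθ0) (hν j))]
          congr 1
          rw [mul_assoc, ← ENNReal.ofReal_ofNat 2, ← ENNReal.ofReal_mul (by norm_num)]
  -- pointwise bound for x
  have hpt : ∀ kb : Fin n → (Fin d → ℤ), (‖deltaIter r ε kb x‖₊ : ℝ≥0∞)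
      ≤ ∑ j ∈ F, (‖dcoef j‖₊ : ℝ≥0∞) * ‖deltaIter r ε kb (u j)‖₊ := by
    intro kb
    have hxe : deltaIter r ε kb x = ∑ j ∈ F, dcoef j • deltaIter r ε kb (u j) := by
      rw [hx, deltaIter_finsetSum]
      exact Finset.sum_congr rfl (fun j _ => deltaIter_smul r ε kb (dcoef j) (u j))
    rw [hxe]
    have h1 : ‖∑ j ∈ F, dcoef j • deltaIter r ε kb (u j)‖₊
        ≤ ∑ j ∈ F, ‖dcoef j‖₊ * ‖deltaIter r ε kb (u j)‖₊ := by
      refine le_trans (nnnorm_sum_le _ _) ?_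
      refine Finset.sum_le_sum (fun j _ => ?_)
      rw [nnnorm_smul]
    exact_mod_cast h1
  -- total ennreal bound
  have hmainE : ∑' kb : Fin n → (Fin d → ℤ), (‖deltaIter r ε kb x‖₊ : ℝ≥0∞)
      ≤ ENNReal.ofReal ((2 * θ₁ * cx) ^ n) := by
    calc ∑' kb : Fin n → (Fin d → ℤ), (‖deltaIter r ε kb x‖₊ : ℝ≥0∞)
        ≤ ∑' kb : Fin n → (Fin d → ℤ),
            ∑ j ∈ F, (‖dcoef j‖₊ : ℝ≥0∞) * ‖deltaIter r ε kb (u j)‖₊ :=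
          ENNReal.tsum_le_tsum hpt
      _ = ∑ j ∈ F, ∑' kb : Fin n → (Fin d → ℤ),
            (‖dcoef j‖₊ : ℝ≥0∞) * ‖deltaIter r ε kb (u j)‖₊ :=
          Summable.tsum_finsetSum (fun j _ => ENNReal.summable)
      _ = ∑ j ∈ F, (‖dcoef j‖₊ : ℝ≥0∞)
            * ∑' kb : Fin n → (Fin d → ℤ), (‖deltaIter r ε kb (u j)‖₊ : ℝ≥0∞) :=
          Finset.sum_congr rfl (fun j _ => ENNReal.tsum_mul_left)
      _ ≤ ∑ j ∈ F, (‖dcoef j‖₊ : ℝ≥0∞) * ENNReal.ofReal ((2 * θ₁ * ν j) ^ n) :=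
          Finset.sum_le_sum (fun j _ => mul_le_mul_right (hper j) _)
      _ = ENNReal.ofReal (∑ j ∈ F, ‖dcoef j‖ * (2 * θ₁ * ν j) ^ n) := by
          rw [ENNReal.ofReal_sum_of_nonneg (fun j _ => mul_nonneg (norm_nonneg _)
            (pow_nonneg (mul_nonneg (mul_nonneg (by norm_num) hθ0) (hν j)) n))]
          refine Finset.sum_congr rfl (fun j _ => ?_)
          rw [ENNReal.ofReal_mul (norm_nonneg _), ofReal_norm, enorm_eq_nnnorm]
      _ ≤ ENNReal.ofReal ((2 * θ₁ * cx) ^ n) := by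
          refine ENNReal.ofReal_le_ofReal ?_
          have heq : ∑ j ∈ F, ‖dcoef j‖ * (2 * θ₁ * ν j) ^ n
              = (2 * θ₁) ^ n * ∑ j ∈ F, ‖dcoef j‖ * ν j ^ n := by
            rw [Finset.mul_sum]
            refine Finset.sum_congr rfl (fun j _ => ?_)
            rw [mul_pow]; ring
          rw [heq]
          calc (2 * θ₁) ^ n * ∑ j ∈ F, ‖dcoef j‖ * ν j ^ n
              ≤ (2 * θ₁) ^ n * cx ^ n :=
                mul_le_mul_of_nonneg_left (hcx n hn)
                  (pow_nonneg (mul_nonneg (by norm_num) hθ0) n)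
            _ = (2 * θ₁ * cx) ^ n := (mul_pow _ _ n).symm
  -- conversion to real statement
  have hne : (∑' kb : Fin n → (Fin d → ℤ), (‖deltaIter r ε kb x‖₊ : ℝ≥0∞)) ≠ ⊤ :=
    ne_top_of_le_ne_top ENNReal.ofReal_ne_top hmainE
  have hs1 : Summable (fun kb : Fin n → (Fin d → ℤ) => ‖deltaIter r ε kb x‖₊) :=
    ENNReal.tsum_coe_ne_top_iff_summable.mp hne
  have hs2 : Summable (fun kb : Fin n → (Fin d → ℤ) => ‖deltaIter r ε kb x‖) := by
    simpa [coe_nnnorm] using NNReal.summable_coe.mpr hs1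
  refine ⟨hs2, ?_⟩
  have hco : ((∑' kb : Fin n → (Fin d → ℤ), ‖deltaIter r ε kb x‖₊ : ℝ≥0) : ℝ≥0∞)
      = ∑' kb : Fin n → (Fin d → ℤ), (‖deltaIter r ε kb x‖₊ : ℝ≥0∞) :=
    ENNReal.coe_tsum hs1
  have h4 : ((∑' kb : Fin n → (Fin d → ℤ), ‖deltaIter r ε kb x‖₊ : ℝ≥0) : ℝ≥0∞)
      ≤ ENNReal.ofReal ((2 * θ₁ * cx) ^ n) := by rw [hco]; exact hmainE
  have h5 : ((∑' kb : Fin n → (Fin d → ℤ), ‖deltaIter r ε kb x‖₊ : ℝ≥0) : ℝ)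
      ≤ (2 * θ₁ * cx) ^ n := by
    have h6 := ENNReal.toReal_mono ENNReal.ofReal_ne_top h4
    simpa [ENNReal.toReal_ofReal hB0] using h6
  calc ∑' kb : Fin n → (Fin d → ℤ), ‖deltaIter r ε kb x‖
      = ((∑' kb : Fin n → (Fin d → ℤ), ‖deltaIter r ε kb x‖₊ : ℝ≥0) : ℝ) := by
        rw [NNReal.coe_tsum]; simp [coe_nnnorm]
    _ ≤ (2 * θ₁ * cx) ^ n := h5
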